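/- Let m ∈ ℕ, let f_0, …, f_m : ℝ → ℂ be almost periodic (Bochner) functions, and let ρ : ℝ → ℂ be a Schwartz function. For ε ∈ (0,1] define u_ε(x) = Σ_{j≤m} ε^{−j} ∫_ℝ f_j(x − εy) ρ^{(j)}(y) dy (which is the regularization (Σ_j f_j^{(j)}) * ρ_ε of the almost periodic distribution Σ_j f_j^{(j)}, where ρ_ε(x) = ε^{−1}ρ(x/ε)). Then each u_ε belongs to 𝓑_ap and the net (u_ε)_{ε∈(0,1]} is moderate: for every k ∈ ℕ there exist m' ∈ ℕ, C > 0 and ε₀ ∈ (0,1] with |u_ε|_{k,∞} ≤ C ε^{−m'} for all ε ≤ ε₀. -/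

import Mathlib

open Filter MeasureTheory Topology

noncomputable section

/-- A function `f : ℝ → ℂ` is almost periodic in the sense of Bochner: it is continuous
and from every sequence of real translates one can extract a subsequence along which
the translates converge uniformly on `ℝ`. -/
def AlmostPeriodic (f : ℝ → ℂ) : Prop :=
  Continuous f ∧ ∀ h : ℕ → ℝ, ∃ φ : ℕ → ℕ, StrictMono φ ∧ ∃ g : ℝ → ℂ,
    TendstoUniformly (fun k x => f (x + h (φ k))) g atTop

/-- `f ∈ 𝓑_ap` : `f` is smooth and every derivative of `f` is almost periodic. -/
def BAp (f : ℝ → ℂ) : Prop :=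
  ContDiff ℝ (⊤ : ℕ∞) f ∧ ∀ j : ℕ, AlmostPeriodic (iteratedDeriv j f)

/-- The seminorm `|f|_{k,∞} = Σ_{j ≤ k} sup_{x ∈ ℝ} ‖f^{(j)}(x)‖`. -/
def apSeminorm (k : ℕ) (f : ℝ → ℂ) : ℝ :=
  ∑ j ∈ Finset.range (k + 1), ⨆ x : ℝ, ‖iteratedDeriv j f x‖

/-- A net `(u_ε)_{ε ∈ (0,1]}` is moderate. -/
def Moderate (u : ℝ → ℝ → ℂ) : Prop :=
  ∀ k : ℕ, ∃ m : ℕ, ∃ C > 0, ∃ ε₀ ∈ Set.Ioc (0:ℝ) 1,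
    ∀ ε ∈ Set.Ioc (0:ℝ) 1, ε ≤ ε₀ → apSeminorm k (u ε) ≤ C / ε ^ m

/-- A net `(u_ε)_{ε ∈ (0,1]}` is negligible. -/
def Negligible (u : ℝ → ℝ → ℂ) : Prop :=
  ∀ k m : ℕ, ∃ C > 0, ∃ ε₀ ∈ Set.Ioc (0:ℝ) 1,
    ∀ ε ∈ Set.Ioc (0:ℝ) 1, ε ≤ ε₀ → apSeminorm k (u ε) ≤ C * ε ^ m

section APlemmas

lemma tendstoUniformly_comp_strictMono {F : ℕ → ℝ → ℂ} {g : ℝ → ℂ}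
    (h : TendstoUniformly F g atTop) {φ : ℕ → ℕ} (hφ : StrictMono φ) :
    TendstoUniformly (fun k => F (φ k)) g atTop :=
  fun u hu => (hφ.tendsto_atTop).eventually (h u hu)

lemma AlmostPeriodic.bounded {f : ℝ → ℂ} (hf : AlmostPeriodic f) :
    ∃ M : ℝ, 0 ≤ M ∧ ∀ x, ‖f x‖ ≤ M := by
  by_contra hc
  push_neg at hc
  have key : ∀ n : ℕ, ∃ x : ℝ, (n : ℝ) < ‖f x‖ := by
    intro n
    rcases hc (n : ℝ) (Nat.cast_nonneg n) with ⟨x, hx⟩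
    exact ⟨x, hx⟩
  choose h hh using key
  rcases hf.2 h with ⟨φ, hφ, g, hg⟩
  have h1 : Tendsto (fun k => ‖f (0 + h (φ k))‖) atTop (𝓝 ‖g 0‖) :=
    (hg.tendsto_at 0).norm
  have h2 : Tendsto (fun k => ‖f (0 + h (φ k))‖) atTop atTop := by
    have hle : ∀ k : ℕ, (φ k : ℝ) ≤ ‖f (0 + h (φ k))‖ := by
      intro k; simpa using le_of_lt (hh (φ k))
    exact tendsto_atTop_mono hle (tendsto_natCast_atTop_atTop.comp hφ.tendsto_atTop)
  exact not_tendsto_atTop_of_tendsto_nhds h1 h2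

lemma AlmostPeriodic.add {f g : ℝ → ℂ} (hf : AlmostPeriodic f) (hg : AlmostPeriodic g) :
    AlmostPeriodic (fun x => f x + g x) := by
  refine ⟨hf.1.add hg.1, fun h => ?_⟩
  rcases hf.2 h with ⟨φ₁, hφ₁, F, hF⟩
  rcases hg.2 (fun k => h (φ₁ k)) with ⟨φ₂, hφ₂, G, hG⟩
  refine ⟨φ₁ ∘ φ₂, hφ₁.comp hφ₂, fun x => F x + G x, ?_⟩
  have hF' := tendstoUniformly_comp_strictMono hF hφ₂
  rw [Metric.tendstoUniformly_iff] at hF' hG ⊢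
  intro δ hδ
  filter_upwards [hF' (δ/2) (by positivity), hG (δ/2) (by positivity)] with k h1 h2 x
  calc dist (F x + G x) (f (x + h (φ₁ (φ₂ k))) + g (x + h (φ₁ (φ₂ k))))
      ≤ dist (F x) (f (x + h (φ₁ (φ₂ k)))) + dist (G x) (g (x + h (φ₁ (φ₂ k)))) :=
        dist_add_add_le _ _ _ _
    _ < δ/2 + δ/2 := add_lt_add (h1 x) (h2 x)
    _ = δ := by ring

lemma AlmostPeriodic.const_smul {f : ℝ → ℂ} (hf : AlmostPeriodic f) (c : ℝ) :
    AlmostPeriodic (fun x => c • f x) := by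
  refine ⟨hf.1.const_smul c, fun h => ?_⟩
  rcases hf.2 h with ⟨φ, hφ, g, hg⟩
  refine ⟨φ, hφ, fun x => c • g x, ?_⟩
  rw [Metric.tendstoUniformly_iff] at hg ⊢
  intro δ hδ
  filter_upwards [hg (δ / (|c| + 1)) (by positivity)] with k hk x
  have : dist (c • g x) (c • f (x + h (φ k))) = |c| * dist (g x) (f (x + h (φ k))) := by
    rw [dist_smul₀, Real.norm_eq_abs]
  rw [this]
  calc |c| * dist (g x) (f (x + h (φ k))) ≤ |c| * (δ / (|c| + 1)) := by
        have := le_of_lt (hk x)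
        exact mul_le_mul_of_nonneg_left this (abs_nonneg c)
    _ < δ := by
        rw [mul_div_assoc']
        rw [div_lt_iff₀ (by positivity)]
        nlinarith [abs_nonneg c]

lemma AlmostPeriodic.const (c : ℂ) : AlmostPeriodic (fun _ => c) := by
  refine ⟨continuous_const, fun h => ⟨id, strictMono_id, fun _ => c, ?_⟩⟩
  intro u hu
  filter_upwards with k x
  exact refl_mem_uniformity hu

lemma AlmostPeriodic.sum {ι : Type*} (s : Finset ι) (F : ι → ℝ → ℂ)
    (h : ∀ i ∈ s, AlmostPeriodic (F i)) :
    AlmostPeriodic (fun x => ∑ i ∈ s, F i x) := by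
  classical
  induction s using Finset.cons_induction with
  | empty => simpa using AlmostPeriodic.const 0
  | cons a s ha ih =>
    simp only [Finset.sum_cons]
    exact (h a (Finset.mem_cons_self a s)).add
      (ih fun i hi => h i (Finset.mem_cons_of_mem hi))

end APlemmas
section Conv

/-- Iterated Schwartz derivative. -/
def schDer (n : ℕ) (ψ : SchwartzMap ℝ ℂ) : SchwartzMap ℝ ℂ := (SchwartzMap.derivCLM ℝ ℂ)^[n] ψ

lemma deriv_coe (ψ : SchwartzMap ℝ ℂ) : deriv ⇑ψ = ⇑(SchwartzMap.derivCLM ℝ ℂ ψ) := by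
  funext x; rw [SchwartzMap.derivCLM_apply]

lemma schDer_coe (n : ℕ) (ψ : SchwartzMap ℝ ℂ) : ⇑(schDer n ψ) = iteratedDeriv n ⇑ψ := by
  induction n generalizing ψ with
  | zero => simp [schDer]
  | succ n ih =>
    rw [iteratedDeriv_succ', deriv_coe, ← ih (SchwartzMap.derivCLM ℝ ℂ ψ)]
    simp [schDer, Function.iterate_succ_apply]

lemma schDer_add (i j : ℕ) (ψ : SchwartzMap ℝ ℂ) :
    schDer i (schDer j ψ) = schDer (i + j) ψ :=
  (Function.iterate_add_apply _ i j ψ).symm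

lemma schDer_succ' (n : ℕ) (ψ : SchwartzMap ℝ ℂ) :
    schDer (n + 1) ψ = SchwartzMap.derivCLM ℝ ℂ (schDer n ψ) :=
  Function.iterate_succ_apply' _ n ψ

/-- Window decay estimate for a Schwartz function. -/
lemma schwartz_window (ψ : SchwartzMap ℝ ℂ) (R : ℝ) :
    ∃ D : ℝ, 0 ≤ D ∧ ∀ z w : ℝ, |w - z| ≤ R → ‖ψ w‖ ≤ D * (1 + z ^ 2)⁻¹ := by
  obtain ⟨C₀, hC₀pos, hC₀⟩ := ψ.decay 0 0
  obtain ⟨C₂, hC₂pos, hC₂⟩ := ψ.decay 2 0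
  refine ⟨(2 + 2 * R ^ 2) * (C₀ + C₂), by positivity, fun z w hzw => ?_⟩
  have hb0 : ‖ψ w‖ ≤ C₀ := by simpa using hC₀ w
  have hb2 : w ^ 2 * ‖ψ w‖ ≤ C₂ := by
    have := hC₂ w
    simpa [Real.norm_eq_abs, sq_abs] using this
  have hsq : (w - z) ^ 2 ≤ R ^ 2 := by
    have := pow_le_pow_left₀ (abs_nonneg (w - z)) hzw 2
    simpa [sq_abs] using this
  have hz : 1 + z ^ 2 ≤ (2 + 2 * R ^ 2) * (1 + w ^ 2) := by
    nlinarith [sq_nonneg (w - z), sq_nonneg w, sq_nonneg R, sq_nonneg (R * w)]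
  have hpos : (0:ℝ) < 1 + z ^ 2 := by positivity
  rw [← div_eq_mul_inv, le_div_iff₀ hpos]
  nlinarith [mul_le_mul_of_nonneg_left hz (norm_nonneg (ψ w)), norm_nonneg (ψ w),
    sq_nonneg R, mul_nonneg (sq_nonneg R) (mul_nonneg (sq_nonneg w) (norm_nonneg (ψ w)))]

end Conv
section ConvCore

variable {ε M : ℝ} {f : ℝ → ℂ}

lemma conv_integrable (hfc : Continuous f) (hM : ∀ x, ‖f x‖ ≤ M)
    (ψ : SchwartzMap ℝ ℂ) (x : ℝ) :
    Integrable (fun y => f (x - ε * y) * ψ y) := by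
  refine Integrable.mono' (ψ.integrable.norm.const_mul M) ?_ ?_
  · exact ((hfc.comp (by continuity)).mul ψ.continuous).aestronglyMeasurable
  · filter_upwards with y
    rw [norm_mul]
    exact mul_le_mul_of_nonneg_right (hM _) (norm_nonneg _)

lemma conv_norm_le (hfc : Continuous f) (hM : ∀ x, ‖f x‖ ≤ M)
    (ψ : SchwartzMap ℝ ℂ) (x : ℝ) :
    ‖∫ y : ℝ, f (x - ε * y) * ψ y‖ ≤ M * ∫ y : ℝ, ‖ψ y‖ := by
  calc ‖∫ y : ℝ, f (x - ε * y) * ψ y‖ ≤ ∫ y : ℝ, ‖f (x - ε * y) * ψ y‖ :=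
        norm_integral_le_integral_norm _
    _ ≤ ∫ y : ℝ, M * ‖ψ y‖ := by
        refine integral_mono (conv_integrable hfc hM ψ x).norm
          (ψ.integrable.norm.const_mul M) fun y => ?_
        rw [norm_mul]
        exact mul_le_mul_of_nonneg_right (hM _) (norm_nonneg _)
    _ = M * ∫ y : ℝ, ‖ψ y‖ := integral_const_mul M _

lemma conv_shift (hε : ε ≠ 0) (ψ : SchwartzMap ℝ ℂ) (x : ℝ) :
    ∫ y : ℝ, f (x - ε * y) * ψ y = ∫ t : ℝ, f (-(ε * t)) * ψ (t + x / ε) := by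
  have harg : ∀ t : ℝ, x - ε * (t + x / ε) = -(ε * t) := by
    intro t; field_simp; ring
  calc ∫ y : ℝ, f (x - ε * y) * ψ y
      = ∫ t : ℝ, f (x - ε * (t + x / ε)) * ψ (t + x / ε) :=
        (integral_add_right_eq_self (μ := volume)
          (fun y => f (x - ε * y) * ψ y) (x / ε)).symm
    _ = ∫ t : ℝ, f (-(ε * t)) * ψ (t + x / ε) := by
        congr 1; funext t; rw [harg t]

lemma integrable_shift_trans {c : ℝ} (g : ℝ → ℝ) (hg : Integrable g) (hgc : Continuous g) :
    Integrable (fun t : ℝ => g (t + c)) :=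
  ((measurePreserving_add_right volume c).integrable_comp
    hgc.aestronglyMeasurable).2 hg

lemma conv_hasDerivAt (hfc : Continuous f) (hM : ∀ x, ‖f x‖ ≤ M) (hM0 : 0 ≤ M)
    (hε : 0 < ε) (ψ : SchwartzMap ℝ ℂ) (x₀ : ℝ) :
    HasDerivAt (fun x => ∫ y : ℝ, f (x - ε * y) * ψ y)
      (ε⁻¹ • ∫ y : ℝ, f (x₀ - ε * y) * (SchwartzMap.derivCLM ℝ ℂ ψ) y) x₀ := by
  set ψ' := SchwartzMap.derivCLM ℝ ℂ ψ with hψ'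
  set c := x₀ / ε with hc
  obtain ⟨D, hD0, hD⟩ := schwartz_window ψ' (1 / ε)
  obtain ⟨D₂, hD₂0, hD₂⟩ := schwartz_window ψ (1 / ε)
  set F : ℝ → ℝ → ℂ := fun x t => f (-(ε * t)) * ψ (t + x / ε) with hF
  set F' : ℝ → ℝ → ℂ := fun x t => f (-(ε * t)) * (ε⁻¹ • ψ' (t + x / ε)) with hF'
  have hint_inv : Integrable (fun t : ℝ => (1 + (t + c) ^ 2)⁻¹) :=
    integrable_shift_trans _ integrable_inv_one_add_sq
      (((continuous_const (y := (1:ℝ))).add (continuous_pow 2)).inv₀ (fun x => (by positivity : (1:ℝ) + x ^ 2 ≠ 0)))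
  have hwin : ∀ x ∈ Metric.ball x₀ 1, ∀ t : ℝ, |(t + x / ε) - (t + c)| ≤ 1 / ε := by
    intro x hx t
    have h1 : (t + x / ε) - (t + c) = (x - x₀) / ε := by rw [hc]; ring
    rw [h1, abs_div, abs_of_pos hε]
    have hx1 : |x - x₀| ≤ 1 := le_of_lt (by simpa [Real.dist_eq] using hx)
    gcongr
  have key := hasDerivAt_integral_of_dominated_loc_of_deriv_le
    (μ := volume) (F := F) (F' := F') (x₀ := x₀)
    (bound := fun t => M * ε⁻¹ * D * (1 + (t + c) ^ 2)⁻¹)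
    (Metric.ball_mem_nhds x₀ one_pos)
    (Filter.Eventually.of_forall fun x =>
      (((hfc.comp (by continuity)).mul (ψ.continuous.comp (by continuity))).aestronglyMeasurable))
    (by
      refine Integrable.mono' (hint_inv.const_mul (M * D₂)) ?_ ?_
      · exact ((hfc.comp (by continuity)).mul (ψ.continuous.comp (by continuity))).aestronglyMeasurable
      · filter_upwards with t
        rw [hF, norm_mul]
        have h1 : ‖ψ (t + x₀ / ε)‖ ≤ D₂ * (1 + (t + c) ^ 2)⁻¹ :=
          hD₂ (t + c) (t + x₀ / ε) (by rw [hc]; simpa using le_of_lt (by positivity : (0:ℝ) < 1/ε))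
        calc ‖f (-(ε * t))‖ * ‖ψ (t + x₀ / ε)‖ ≤ M * (D₂ * (1 + (t + c) ^ 2)⁻¹) :=
              mul_le_mul (hM _) h1 (norm_nonneg _) hM0
          _ = M * D₂ * (1 + (t + c) ^ 2)⁻¹ := by ring)
    (((hfc.comp (by continuity)).mul
      ((ψ'.continuous.comp (by continuity)).const_smul ε⁻¹)).aestronglyMeasurable)
    (by
      filter_upwards with t x hx
      rw [hF', norm_mul, norm_smul, Real.norm_eq_abs, abs_of_pos (inv_pos.2 hε)]
      have h1 : ‖ψ' (t + x / ε)‖ ≤ D * (1 + (t + c) ^ 2)⁻¹ :=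
        hD (t + c) (t + x / ε) (hwin x hx t)
      have hinvnn : (0:ℝ) ≤ (1 + (t + c) ^ 2)⁻¹ := by positivity
      calc ‖f (-(ε * t))‖ * (ε⁻¹ * ‖ψ' (t + x / ε)‖)
          ≤ M * (ε⁻¹ * (D * (1 + (t + c) ^ 2)⁻¹)) := by
            refine mul_le_mul (hM _) ?_ (by positivity) hM0
            exact mul_le_mul_of_nonneg_left h1 (le_of_lt (inv_pos.2 hε))
        _ = M * ε⁻¹ * D * (1 + (t + c) ^ 2)⁻¹ := by ring)
    ((hint_inv.const_mul (M * ε⁻¹ * D)))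
    (by
      filter_upwards with t x _
      have hinner : HasDerivAt (fun x : ℝ => t + x / ε) ε⁻¹ x := by
        simpa [one_div] using ((hasDerivAt_id x).div_const ε).const_add t
      have houter : HasDerivAt ⇑ψ (deriv ⇑ψ (t + x / ε)) (t + x / ε) :=
        (ψ.differentiableAt).hasDerivAt
      have := (houter.scomp x hinner)
      rw [deriv_coe] at this
      exact this.const_mul (f (-(ε * t))))
  obtain ⟨-, hkey⟩ := key
  have heq : (fun x => ∫ y : ℝ, f (x - ε * y) * ψ y) = fun x => ∫ t : ℝ, F x t := by
    funext x; exact conv_shift hε.ne' ψ x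
  rw [heq]
  have : (∫ t : ℝ, F' x₀ t) = ε⁻¹ • ∫ y : ℝ, f (x₀ - ε * y) * ψ' y := by
    rw [conv_shift hε.ne' ψ' x₀]
    rw [← integral_smul]
    congr 1; funext t
    show f (-(ε * t)) * ε⁻¹ • ψ' (t + x₀ / ε) = ε⁻¹ • (f (-(ε * t)) * ψ' (t + x₀ / ε))
    rw [mul_smul_comm]
  rw [← this]
  exact hkey

end ConvCore
section ConvMore

open scoped ContDiff

variable {ε M : ℝ} {f : ℝ → ℂ}

lemma conv_deriv (hfc : Continuous f) (hM : ∀ x, ‖f x‖ ≤ M) (hM0 : 0 ≤ M)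
    (hε : 0 < ε) (ψ : SchwartzMap ℝ ℂ) :
    deriv (fun x => ∫ y : ℝ, f (x - ε * y) * ψ y)
      = fun x => ε⁻¹ • ∫ y : ℝ, f (x - ε * y) * (SchwartzMap.derivCLM ℝ ℂ ψ) y := by
  funext x
  exact (conv_hasDerivAt hfc hM hM0 hε ψ x).deriv

lemma conv_contDiff_nat (hfc : Continuous f) (hM : ∀ x, ‖f x‖ ≤ M) (hM0 : 0 ≤ M)
    (hε : 0 < ε) (n : ℕ) (ψ : SchwartzMap ℝ ℂ) :
    ContDiff ℝ (n : WithTop ℕ∞) (fun x => ∫ y : ℝ, f (x - ε * y) * ψ y) := by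
  induction n generalizing ψ with
  | zero =>
    rw [show ((0 : ℕ) : WithTop ℕ∞) = 0 from rfl, contDiff_zero]
    exact Differentiable.continuous fun x => (conv_hasDerivAt hfc hM hM0 hε ψ x).differentiableAt
  | succ n ih =>
    rw [show ((n + 1 : ℕ) : WithTop ℕ∞) = (n : WithTop ℕ∞) + 1 by push_cast; rfl]
    refine contDiff_succ_iff_deriv.2 ⟨?_, ?_, ?_⟩
    · exact fun x => (conv_hasDerivAt hfc hM hM0 hε ψ x).differentiableAt
    · intro h; exact absurd h (by simp)
    · rw [conv_deriv hfc hM hM0 hε ψ]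
      exact (ih (SchwartzMap.derivCLM ℝ ℂ ψ)).const_smul ε⁻¹

lemma conv_contDiff (hfc : Continuous f) (hM : ∀ x, ‖f x‖ ≤ M) (hM0 : 0 ≤ M)
    (hε : 0 < ε) (ψ : SchwartzMap ℝ ℂ) :
    ContDiff ℝ ((⊤ : ℕ∞) : WithTop ℕ∞) (fun x => ∫ y : ℝ, f (x - ε * y) * ψ y) :=
  contDiff_infty.2 fun n => conv_contDiff_nat hfc hM hM0 hε n ψ

lemma conv_iteratedDeriv (hfc : Continuous f) (hM : ∀ x, ‖f x‖ ≤ M) (hM0 : 0 ≤ M)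
    (hε : 0 < ε) (k : ℕ) (ψ : SchwartzMap ℝ ℂ) :
    iteratedDeriv k (fun x => ∫ y : ℝ, f (x - ε * y) * ψ y)
      = fun x => (ε⁻¹) ^ k • ∫ y : ℝ, f (x - ε * y) * (schDer k ψ) y := by
  induction k generalizing ψ with
  | zero => simp [schDer]
  | succ k ih =>
    rw [iteratedDeriv_succ, ih ψ]
    funext x
    have hdiff : ∀ z : ℝ, DifferentiableAt ℝ
        (fun x => ∫ y : ℝ, f (x - ε * y) * (schDer k ψ) y) z :=
      fun z => (conv_hasDerivAt hfc hM hM0 hε (schDer k ψ) z).differentiableAt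
    rw [deriv_fun_const_smul _ (hdiff x)]
    have := (conv_hasDerivAt hfc hM hM0 hε (schDer k ψ) x).deriv
    rw [this, schDer_succ', smul_smul, ← pow_succ]

end ConvMore
section ConvAP

variable {ε M : ℝ} {f : ℝ → ℂ}

lemma conv_ap (hf : AlmostPeriodic f) (hM : ∀ x, ‖f x‖ ≤ M) (hM0 : 0 ≤ M)
    (hε : 0 < ε) (ψ : SchwartzMap ℝ ℂ) :
    AlmostPeriodic (fun x => ∫ y : ℝ, f (x - ε * y) * ψ y) := by
  constructor
  · exact Differentiable.continuous fun x =>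
      (conv_hasDerivAt hf.1 hM hM0 hε ψ x).differentiableAt
  · intro h
    rcases hf.2 h with ⟨φ, hφ, g, hg⟩
    refine ⟨φ, hφ, fun x => ∫ y : ℝ, g (x - ε * y) * ψ y, ?_⟩
    have hgc : Continuous g := hg.continuous
      (Frequently.of_forall fun k => hf.1.comp (by continuity))
    have hgM : ∀ z, ‖g z‖ ≤ M := fun z =>
      le_of_tendsto (hg.tendsto_at z).norm (Eventually.of_forall fun k => hM _)
    rw [Metric.tendstoUniformly_iff] at hg ⊢
    intro δ hδ
    set I := ∫ y : ℝ, ‖ψ y‖ with hI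
    have hI0 : 0 ≤ I := integral_nonneg fun y => norm_nonneg _
    have hδ' : (0:ℝ) < δ / (2 * (I + 1)) := by positivity
    filter_upwards [hg (δ / (2 * (I + 1))) hδ'] with k hk x
    have hfk : Continuous (fun z => f (z + h (φ k))) := hf.1.comp (by continuity)
    have hfkM : ∀ z, ‖f (z + h (φ k))‖ ≤ M := fun z => hM _
    have int_f0 : Integrable (fun y => f (x - ε * y + h (φ k)) * ψ y) :=
      conv_integrable (f := fun z => f (z + h (φ k))) hfk hfkM ψ x
    have harg : ∀ y : ℝ, x - ε * y + h (φ k) = x + h (φ k) - ε * y := fun y => by ring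
    have int_f : Integrable (fun y => f (x + h (φ k) - ε * y) * ψ y) := by
      refine int_f0.congr (Eventually.of_forall fun y => ?_)
      ring_nf
    have int_g : Integrable (fun y => g (x - ε * y) * ψ y) :=
      conv_integrable hgc hgM ψ x
    rw [dist_eq_norm]
    have hsub : (∫ y : ℝ, g (x - ε * y) * ψ y) - (∫ y : ℝ, f (x + h (φ k) - ε * y) * ψ y)
        = ∫ y : ℝ, (g (x - ε * y) - f (x + h (φ k) - ε * y)) * ψ y := by
      rw [← integral_sub int_g int_f]
      congr 1; funext y; ring
    rw [hsub]
    calc ‖∫ y : ℝ, (g (x - ε * y) - f (x + h (φ k) - ε * y)) * ψ y‖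
        ≤ ∫ y : ℝ, ‖(g (x - ε * y) - f (x + h (φ k) - ε * y)) * ψ y‖ :=
          norm_integral_le_integral_norm _
      _ ≤ ∫ y : ℝ, (δ / (2 * (I + 1))) * ‖ψ y‖ := by
          refine integral_mono (((int_g.sub int_f).congr (Eventually.of_forall fun y => by
              show _ = (g (x - ε * y) - f (x + h (φ k) - ε * y)) * ψ y; simp [sub_mul])).norm)
            (ψ.integrable.norm.const_mul _) fun y => ?_
          rw [norm_mul]
          refine mul_le_mul_of_nonneg_right ?_ (norm_nonneg _)
          have := hk (x - ε * y)
          rw [dist_eq_norm, harg y] at this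
          exact le_of_lt this
      _ = (δ / (2 * (I + 1))) * I := integral_const_mul _ _
      _ < δ := by
          rw [div_mul_eq_mul_div, div_lt_iff₀ (by positivity)]
          nlinarith
end ConvAP
section SumSmul

open scoped ContDiff

lemma nat_lt_infty (i : ℕ) : (i : WithTop ℕ∞) < ((⊤ : ℕ∞) : WithTop ℕ∞) := by
  exact_mod_cast WithTop.coe_lt_top (i : ℕ)

lemma iteratedDeriv_fun_const_smul' {F : ℝ → ℂ}
    (hF : ContDiff ℝ ((⊤ : ℕ∞) : WithTop ℕ∞) F) (i : ℕ) (c : ℝ) :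
    iteratedDeriv i (fun x => c • F x) = fun x => c • iteratedDeriv i F x := by
  induction i with
  | zero => simp [iteratedDeriv_zero]
  | succ i ih =>
    rw [iteratedDeriv_succ, ih, iteratedDeriv_succ]
    funext x
    exact deriv_const_smul c
      ((hF.differentiable_iteratedDeriv i (nat_lt_infty i)).differentiableAt)

lemma iteratedDeriv_fun_sum' {s : Finset ℕ} {F : ℕ → ℝ → ℂ}
    (hF : ∀ j ∈ s, ContDiff ℝ ((⊤ : ℕ∞) : WithTop ℕ∞) (F j)) (i : ℕ) :
    iteratedDeriv i (fun x => ∑ j ∈ s, F j x) = fun x => ∑ j ∈ s, iteratedDeriv i (F j) x := by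
  induction i with
  | zero => simp [iteratedDeriv_zero]
  | succ i ih =>
    rw [iteratedDeriv_succ, ih]
    funext x
    rw [deriv_fun_sum (fun j hj =>
      (((hF j hj).differentiable_iteratedDeriv i (nat_lt_infty i)).differentiableAt))]
    simp only [iteratedDeriv_succ]

end SumSmul

/-- regularizations of an almost periodic distribution `Σ_j f_j^{(j)}`
form a moderate net of elements of `𝓑_ap`. -/
theorem regularization_moderate (m : ℕ) (f : ℕ → ℝ → ℂ)
    (hf : ∀ j ≤ m, AlmostPeriodic (f j)) (ρ : SchwartzMap ℝ ℂ) :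
    (∀ ε ∈ Set.Ioc (0:ℝ) 1, BAp (fun x => ∑ j ∈ Finset.range (m + 1),
        (ε ^ j)⁻¹ • ∫ y : ℝ, f j (x - ε * y) * iteratedDeriv j (ρ : ℝ → ℂ) y)) ∧
      Moderate (fun ε x => ∑ j ∈ Finset.range (m + 1),
        (ε ^ j)⁻¹ • ∫ y : ℝ, f j (x - ε * y) * iteratedDeriv j (ρ : ℝ → ℂ) y) := by

  classical
  have hMex : ∀ j : ℕ, ∃ Mj : ℝ, 0 ≤ Mj ∧ (j ≤ m → ∀ x, ‖f j x‖ ≤ Mj) := by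
    intro j
    by_cases hj : j ≤ m
    · obtain ⟨Mj, h0, hb⟩ := (hf j hj).bounded
      exact ⟨Mj, h0, fun _ => hb⟩
    · exact ⟨0, le_rfl, fun h => absurd h hj⟩
  choose M hM0 hMb using hMex
  have hcoe : ∀ j : ℕ, iteratedDeriv j (⇑ρ) = ⇑(schDer j ρ) := fun j => (schDer_coe j ρ).symm
  -- per-epsilon facts
  have hmem : ∀ j ∈ Finset.range (m + 1), j ≤ m := fun j hj =>
    Nat.lt_succ_iff.mp (Finset.mem_range.mp hj)
  -- smoothness of each term
  have hterm_smooth : ∀ ε : ℝ, 0 < ε → ∀ j ∈ Finset.range (m + 1),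
      ContDiff ℝ ((⊤ : ℕ∞) : WithTop ℕ∞)
        (fun x => (ε ^ j)⁻¹ • ∫ y : ℝ, f j (x - ε * y) * (schDer j ρ : ℝ → ℂ) y) := by
    intro ε hε j hj
    exact (conv_contDiff (hf j (hmem j hj)).1 (hMb j (hmem j hj)) (hM0 j) hε
      (schDer j ρ)).const_smul _
  -- iterated derivative formula
  have hiter : ∀ ε : ℝ, 0 < ε → ∀ i : ℕ,
      iteratedDeriv i (fun x => ∑ j ∈ Finset.range (m + 1),
          (ε ^ j)⁻¹ • ∫ y : ℝ, f j (x - ε * y) * iteratedDeriv j (⇑ρ) y)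
        = fun x => ∑ j ∈ Finset.range (m + 1),
            (ε ^ j)⁻¹ • ((ε⁻¹) ^ i • ∫ y : ℝ, f j (x - ε * y) * (schDer (i + j) ρ : ℝ → ℂ) y) := by
    intro ε hε i
    simp only [hcoe]
    rw [iteratedDeriv_fun_sum' (fun j hj => hterm_smooth ε hε j hj) i]
    funext x
    refine Finset.sum_congr rfl fun j hj => ?_
    have h1 := iteratedDeriv_fun_const_smul'
      (conv_contDiff (hf j (hmem j hj)).1 (hMb j (hmem j hj)) (hM0 j) hε (schDer j ρ)) i
      ((ε ^ j)⁻¹)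
    rw [h1]
    have h2 := conv_iteratedDeriv (hf j (hmem j hj)).1 (hMb j (hmem j hj)) (hM0 j) hε i
      (schDer j ρ)
    rw [h2, schDer_add]
  constructor
  · -- BAp
    rintro ε ⟨hε0, hε1⟩
    constructor
    · simp only [hcoe]
      exact ContDiff.sum fun j hj => hterm_smooth ε hε0 j hj
    · intro i
      rw [hiter ε hε0 i]
      refine AlmostPeriodic.sum _ _ fun j hj => ?_
      exact ((conv_ap (hf j (hmem j hj)) (hMb j (hmem j hj)) (hM0 j) hε0
        (schDer (i + j) ρ)).const_smul _).const_smul _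
  · -- Moderate
    intro k
    set S : ℝ := ∑ i ∈ Finset.range (k + 1), ∑ j ∈ Finset.range (m + 1),
      M j * ∫ y : ℝ, ‖(schDer (i + j) ρ : ℝ → ℂ) y‖ with hS
    have hS0 : 0 ≤ S := by
      refine Finset.sum_nonneg fun i _ => Finset.sum_nonneg fun j _ => ?_
      exact mul_nonneg (hM0 j) (integral_nonneg fun y => norm_nonneg _)
    refine ⟨m + k, 1 + S, by positivity, 1, ⟨one_pos, le_refl 1⟩, ?_⟩
    rintro ε ⟨hε0, hε1⟩ -
    have hpow : (0:ℝ) < ε ^ (m + k) := pow_pos hε0 _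
    rw [apSeminorm]
    have hstep : ∀ i ∈ Finset.range (k + 1),
        (⨆ x : ℝ, ‖iteratedDeriv i (fun x => ∑ j ∈ Finset.range (m + 1),
            (ε ^ j)⁻¹ • ∫ y : ℝ, f j (x - ε * y) * iteratedDeriv j (⇑ρ) y) x‖)
        ≤ (ε ^ (m + k))⁻¹ * ∑ j ∈ Finset.range (m + 1),
            M j * ∫ y : ℝ, ‖(schDer (i + j) ρ : ℝ → ℂ) y‖ := by
      intro i hi
      have hik : i ≤ k := Nat.lt_succ_iff.mp (Finset.mem_range.mp hi)
      have hBnn : 0 ≤ (ε ^ (m + k))⁻¹ * ∑ j ∈ Finset.range (m + 1),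
          M j * ∫ y : ℝ, ‖(schDer (i + j) ρ : ℝ → ℂ) y‖ := by
        refine mul_nonneg (le_of_lt (inv_pos.2 hpow)) ?_
        exact Finset.sum_nonneg fun j _ =>
          mul_nonneg (hM0 j) (integral_nonneg fun y => norm_nonneg _)
      refine Real.iSup_le (fun x => ?_) hBnn
      rw [hiter ε hε0 i]
      calc ‖∑ j ∈ Finset.range (m + 1),
              (ε ^ j)⁻¹ • ((ε⁻¹) ^ i • ∫ y : ℝ, f j (x - ε * y) * (schDer (i + j) ρ : ℝ → ℂ) y)‖
          ≤ ∑ j ∈ Finset.range (m + 1),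
              ‖(ε ^ j)⁻¹ • ((ε⁻¹) ^ i • ∫ y : ℝ, f j (x - ε * y) * (schDer (i + j) ρ : ℝ → ℂ) y)‖ :=
            norm_sum_le _ _
        _ ≤ ∑ j ∈ Finset.range (m + 1),
              (ε ^ (m + k))⁻¹ * (M j * ∫ y : ℝ, ‖(schDer (i + j) ρ : ℝ → ℂ) y‖) := by
            refine Finset.sum_le_sum fun j hj => ?_
            have hjm : j ≤ m := hmem j hj
            rw [norm_smul, norm_smul, Real.norm_eq_abs, Real.norm_eq_abs,
              abs_of_pos (inv_pos.2 (pow_pos hε0 j)), abs_of_pos (pow_pos (inv_pos.2 hε0) i)]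
            have hV : ‖∫ y : ℝ, f j (x - ε * y) * (schDer (i + j) ρ : ℝ → ℂ) y‖
                ≤ M j * ∫ y : ℝ, ‖(schDer (i + j) ρ : ℝ → ℂ) y‖ :=
              conv_norm_le (hf j hjm).1 (hMb j hjm) (schDer (i + j) ρ) x
            have hsc : (ε ^ j)⁻¹ * (ε⁻¹) ^ i ≤ (ε ^ (m + k))⁻¹ := by
              rw [inv_pow, ← mul_inv, ← pow_add]
              have := pow_le_pow_of_le_one (le_of_lt hε0) hε1 (add_le_add hjm hik)
              exact inv_anti₀ hpow this
            calc (ε ^ j)⁻¹ * ((ε⁻¹) ^ i *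
                    ‖∫ y : ℝ, f j (x - ε * y) * (schDer (i + j) ρ : ℝ → ℂ) y‖)
                = ((ε ^ j)⁻¹ * (ε⁻¹) ^ i) *
                    ‖∫ y : ℝ, f j (x - ε * y) * (schDer (i + j) ρ : ℝ → ℂ) y‖ := by ring
              _ ≤ (ε ^ (m + k))⁻¹ * (M j * ∫ y : ℝ, ‖(schDer (i + j) ρ : ℝ → ℂ) y‖) := by
                  refine mul_le_mul hsc hV (norm_nonneg _) (le_of_lt (inv_pos.2 hpow))
        _ = (ε ^ (m + k))⁻¹ * ∑ j ∈ Finset.range (m + 1),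
              M j * ∫ y : ℝ, ‖(schDer (i + j) ρ : ℝ → ℂ) y‖ := by
            rw [Finset.mul_sum]
    calc (∑ i ∈ Finset.range (k + 1), ⨆ x : ℝ, ‖iteratedDeriv i (fun x =>
            ∑ j ∈ Finset.range (m + 1),
              (ε ^ j)⁻¹ • ∫ y : ℝ, f j (x - ε * y) * iteratedDeriv j (⇑ρ) y) x‖)
        ≤ ∑ i ∈ Finset.range (k + 1), (ε ^ (m + k))⁻¹ * ∑ j ∈ Finset.range (m + 1),
            M j * ∫ y : ℝ, ‖(schDer (i + j) ρ : ℝ → ℂ) y‖ :=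
          Finset.sum_le_sum hstep
      _ = (ε ^ (m + k))⁻¹ * S := by rw [hS, Finset.mul_sum]
      _ ≤ (ε ^ (m + k))⁻¹ * (1 + S) := by
          refine mul_le_mul_of_nonneg_left ?_ (le_of_lt (inv_pos.2 hpow))
          linarith
      _ = (1 + S) / ε ^ (m + k) := by rw [div_eq_mul_inv, mul_comm]
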